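/- Let S and A be finite nonempty sets, H ≥ 1 an integer, r : S×A → [0,1] a reward function, φ : S×A → ℝ^p and ψ : S → ℝ^q feature maps, and M* ∈ ℝ^{p×q} such that for every (s,a) ∈ S×A: φ(s,a)ᵀ M* ψ(s') ≥ 0 for all s' ∈ S and Σ_{s'∈S} φ(s,a)ᵀ M* ψ(s') = 1. Define the optimal value functions backwards: V*_{H+1} ≡ 0, and for h = H,…,1: Q*_h(s,a) = r(s,a) + Σ_{s'} φ(s,a)ᵀ M* ψ(s') · V*_{h+1}(s') and V*_h(s) = max_{a} Q*_h(s,a). Let B ⊆ ℝ^{p×q} × ℝ^{p×q} be a nonempty bounded set containing a pair (L₀, S₀) with L₀ + S₀ = M*, and define the optimistic value functions backwards: V_{H+1} ≡ 0, and for h = H,…,1: Q_h(s,a) = r(s,a) + sup_{(L,S)∈B} Σ_{s'} φ(s,a)ᵀ (L+S) ψ(s') · V_{h+1}(s') and V_h(s) = min( H, max( 0, max_a Q_h(s,a) ) ). Then for every h ∈ {1,…,H} and every (s,a) ∈ S×A, Q_h(s,a) ≥ Q*_h(s,a). -/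

import Mathlib

open Matrix BigOperators

/-- Optimism (UCB) lemma for UCB-Q learning under composite MDPs: if the
confidence region `B` is bounded and contains a pair `(L₀, S₀)` with `L₀ + S₀ = M*`, then
the optimistic action-value functions dominate the optimal ones at every stage `h ∈ [1,H]`
and every state-action pair. -/
theorem ucb_optimism {S A : Type*} [Fintype S] [Fintype A] [Nonempty S] [Nonempty A]
    {p q : ℕ} (H : ℕ) (hH : 1 ≤ H)
    (r : S → A → ℝ) (hr : ∀ s a, r s a ∈ Set.Icc (0 : ℝ) 1)
    (φ : S → A → (Fin p → ℝ)) (ψ : S → (Fin q → ℝ))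
    (M : Matrix (Fin p) (Fin q) ℝ)
    (hpos : ∀ s a s', 0 ≤ φ s a ⬝ᵥ (M *ᵥ ψ s'))
    (hsum : ∀ s a, ∑ s', φ s a ⬝ᵥ (M *ᵥ ψ s') = 1)
    (B : Set (Matrix (Fin p) (Fin q) ℝ × Matrix (Fin p) (Fin q) ℝ))
    (hBbdd : ∃ R : ℝ, ∀ LS ∈ B, (∀ i j, |LS.1 i j| ≤ R) ∧ (∀ i j, |LS.2 i j| ≤ R))
    (hBmem : ∃ L₀ S₀, (L₀, S₀) ∈ B ∧ L₀ + S₀ = M)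
    (Qstar : ℕ → S → A → ℝ) (Vstar : ℕ → S → ℝ)
    (Q : ℕ → S → A → ℝ) (V : ℕ → S → ℝ)
    (hVstarTop : ∀ s, Vstar (H + 1) s = 0)
    (hQstar : ∀ h ∈ Finset.Icc 1 H, ∀ s a,
      Qstar h s a = r s a + ∑ s', (φ s a ⬝ᵥ (M *ᵥ ψ s')) * Vstar (h + 1) s')
    (hVstar : ∀ h ∈ Finset.Icc 1 H, ∀ s, Vstar h s = ⨆ a, Qstar h s a)
    (hVTop : ∀ s, V (H + 1) s = 0)
    (hQ : ∀ h ∈ Finset.Icc 1 H, ∀ s a,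
      Q h s a = r s a +
        ⨆ LS ∈ B, ∑ s', (φ s a ⬝ᵥ ((LS.1 + LS.2) *ᵥ ψ s')) * V (h + 1) s')
    (hV : ∀ h ∈ Finset.Icc 1 H, ∀ s,
      V h s = min (H : ℝ) (max 0 (⨆ a, Q h s a))) :
    ∀ h ∈ Finset.Icc 1 H, ∀ s a, Qstar h s a ≤ Q h s a := by
  classical
  obtain ⟨R, hR⟩ := hBbdd
  obtain ⟨L₀, S₀, hL₀mem, hL₀⟩ := hBmem
  set R' : ℝ := max R 0 with hR'
  -- bounds on the truncated value function
  have hVb : ∀ h, 1 ≤ h → h ≤ H + 1 → ∀ s, 0 ≤ V h s ∧ V h s ≤ H := by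
    intro h h1 h2 s
    rcases eq_or_lt_of_le h2 with he | hl
    · rw [he, hVTop]; exact ⟨le_rfl, Nat.cast_nonneg H⟩
    · have hm : h ∈ Finset.Icc 1 H := Finset.mem_Icc.mpr ⟨h1, by omega⟩
      rw [hV h hm s]
      exact ⟨le_min (Nat.cast_nonneg H) (le_max_left _ _), min_le_left _ _⟩
  -- one-step lemma
  have step : ∀ h, h ∈ Finset.Icc 1 H →
      (∀ s, Vstar (h+1) s ≤ V (h+1) s) →
      (∀ s, Vstar (h+1) s ≤ (H:ℝ) - h) →
      ∀ s a, Qstar h s a ≤ Q h s a ∧ Qstar h s a ≤ (H:ℝ) + 1 - h := by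
    intro h hm ihV ihB s a
    obtain ⟨h1, h2⟩ := Finset.mem_Icc.mp hm
    have hV1 : ∀ s', 0 ≤ V (h+1) s' ∧ V (h+1) s' ≤ H :=
      fun s' => hVb (h+1) (by omega) (by omega) s'
    set f : Matrix (Fin p) (Fin q) ℝ × Matrix (Fin p) (Fin q) ℝ → ℝ :=
      fun LS => ∑ s', (φ s a ⬝ᵥ ((LS.1 + LS.2) *ᵥ ψ s')) * V (h + 1) s' with hf
    set C : ℝ := ∑ s', (∑ i, |φ s a i| * ∑ j, 2 * R' * |ψ s' j|) * H with hC
    have hfb : ∀ LS ∈ B, f LS ≤ C := by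
      intro LS hLS
      obtain ⟨hL, hS⟩ := hR LS hLS
      refine Finset.sum_le_sum fun s' _ => ?_
      have hdp : |φ s a ⬝ᵥ ((LS.1 + LS.2) *ᵥ ψ s')|
          ≤ ∑ i, |φ s a i| * ∑ j, 2 * R' * |ψ s' j| := by
        calc |φ s a ⬝ᵥ ((LS.1 + LS.2) *ᵥ ψ s')|
            ≤ ∑ i, |φ s a i * ((LS.1 + LS.2) *ᵥ ψ s') i| :=
              Finset.abs_sum_le_sum_abs _ _
          _ = ∑ i, |φ s a i| * |((LS.1 + LS.2) *ᵥ ψ s') i| := by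
              simp [abs_mul]
          _ ≤ ∑ i, |φ s a i| * ∑ j, 2 * R' * |ψ s' j| := by
              refine Finset.sum_le_sum fun i _ =>
                mul_le_mul_of_nonneg_left ?_ (abs_nonneg _)
              calc |((LS.1 + LS.2) *ᵥ ψ s') i|
                  ≤ ∑ j, |(LS.1 + LS.2) i j * ψ s' j| := by
                    simpa [Matrix.mulVec, dotProduct] using
                      Finset.abs_sum_le_sum_abs
                        (fun j => (LS.1 + LS.2) i j * ψ s' j) Finset.univ
                _ ≤ ∑ j, 2 * R' * |ψ s' j| := by
                    refine Finset.sum_le_sum fun j _ => ?_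
                    rw [abs_mul]
                    refine mul_le_mul_of_nonneg_right ?_ (abs_nonneg _)
                    calc |(LS.1 + LS.2) i j| = |LS.1 i j + LS.2 i j| := by
                          simp [Matrix.add_apply]
                      _ ≤ |LS.1 i j| + |LS.2 i j| := abs_add_le _ _
                      _ ≤ R + R := add_le_add (hL i j) (hS i j)
                      _ ≤ 2 * R' := by
                          have := le_max_left R (0:ℝ); rw [hR']; linarith
      calc (φ s a ⬝ᵥ ((LS.1 + LS.2) *ᵥ ψ s')) * V (h + 1) s'
          ≤ |φ s a ⬝ᵥ ((LS.1 + LS.2) *ᵥ ψ s')| * V (h + 1) s' :=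
            mul_le_mul_of_nonneg_right (le_abs_self _) (hV1 s').1
        _ ≤ |φ s a ⬝ᵥ ((LS.1 + LS.2) *ᵥ ψ s')| * H :=
            mul_le_mul_of_nonneg_left (hV1 s').2 (abs_nonneg _)
        _ ≤ (∑ i, |φ s a i| * ∑ j, 2 * R' * |ψ s' j|) * H :=
            mul_le_mul_of_nonneg_right hdp (Nat.cast_nonneg H)
    have hgb : BddAbove (Set.range fun LS => ⨆ _ : LS ∈ B, f LS) := by
      refine ⟨max C 0, ?_⟩
      rintro x ⟨LS, rfl⟩
      show (⨆ _ : LS ∈ B, f LS) ≤ max C 0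
      by_cases hLS : LS ∈ B
      · rw [ciSup_pos hLS]; exact le_max_of_le_left (hfb LS hLS)
      · haveI : IsEmpty (LS ∈ B) := ⟨hLS⟩
        rw [Real.iSup_of_isEmpty]
        exact le_max_right _ _
    have hsup : f (L₀, S₀) ≤ ⨆ LS ∈ B, f LS := by
      refine le_trans ?_ (le_ciSup hgb (L₀, S₀))
      rw [ciSup_pos hL₀mem]
    constructor
    · rw [hQstar h hm s a, hQ h hm s a]
      refine add_le_add_right (le_trans ?_ hsup) _
      have hfe : f (L₀, S₀) = ∑ s', (φ s a ⬝ᵥ (M *ᵥ ψ s')) * V (h + 1) s' := by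
        rw [hf]; simp only [hL₀]
      rw [hfe]
      exact Finset.sum_le_sum fun s' _ =>
        mul_le_mul_of_nonneg_left (ihV s') (hpos s a s')
    · rw [hQstar h hm s a]
      have hb1 : ∑ s', (φ s a ⬝ᵥ (M *ᵥ ψ s')) * Vstar (h+1) s'
          ≤ ∑ s', (φ s a ⬝ᵥ (M *ᵥ ψ s')) * ((H:ℝ) - h) :=
        Finset.sum_le_sum fun s' _ =>
          mul_le_mul_of_nonneg_left (ihB s') (hpos s a s')
      have hb2 : ∑ s', (φ s a ⬝ᵥ (M *ᵥ ψ s')) * ((H:ℝ) - h) = (H:ℝ) - h := by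
        rw [← Finset.sum_mul, hsum s a, one_mul]
      have hr2 := (hr s a).2
      linarith
  -- backward induction
  have key : ∀ n h, h + n = H + 1 → 1 ≤ h →
      (∀ s, Vstar h s ≤ V h s) ∧ (∀ s, Vstar h s ≤ (H:ℝ) + 1 - h) := by
    intro n
    induction n with
    | zero =>
      intro h hh _
      have he : h = H + 1 := by omega
      subst he
      refine ⟨fun s => ?_, fun s => ?_⟩
      · rw [hVstarTop, hVTop]
      · rw [hVstarTop]; push_cast; linarith
    | succ n ih =>
      intro h hh h1
      have hm : h ∈ Finset.Icc 1 H := Finset.mem_Icc.mpr ⟨h1, by omega⟩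
      obtain ⟨ihV, ihB'⟩ := ih (h+1) (by omega) (by omega)
      have ihB : ∀ s, Vstar (h+1) s ≤ (H:ℝ) - h := by
        intro s; have hx := ihB' s; push_cast at hx ⊢; linarith
      have hQs := step h hm ihV ihB
      have hh1 : (1:ℝ) ≤ h := by exact_mod_cast h1
      refine ⟨fun s => ?_, fun s => ?_⟩
      · rw [hVstar h hm s, hV h hm s]
        refine le_min (ciSup_le fun a => ?_) (le_max_of_le_right ?_)
        · have := (hQs s a).2; linarith
        · exact ciSup_mono (Set.Finite.bddAbove (Set.finite_range _))
            fun a => (hQs s a).1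
      · rw [hVstar h hm s]
        exact ciSup_le fun a => (hQs s a).2
  intro h hm s a
  obtain ⟨h1, h2⟩ := Finset.mem_Icc.mp hm
  obtain ⟨ihV, ihB'⟩ := key (H - h) (h+1) (by omega) (by omega)
  have ihB : ∀ s, Vstar (h+1) s ≤ (H:ℝ) - h := by
    intro s; have hx := ihB' s; push_cast at hx; linarith
  exact (step h hm ihV ihB s a).1
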